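/- (One-round convex contraction for DANE with exact solvers.) Let f_i be continuously differentiable and μ-convex (μ ≥ 0), f = (1/n)Σ f_i with minimizer x⋆, and assume δ_A-AHD: (1/n)Σ_i ‖∇(f_i − f)(x) − ∇(f_i − f)(y)‖² ≤ δ_A²‖x−y‖². With h_{i,r} = ∇f_i(x^r) − ∇f(x^r), λ ≥ δ_A, x_{i,r+1} = argmin F_{i,r}, and x^{r+1} = (1/n)Σ x_{i,r+1}: f(x^{r+1}) − f(x) ≤ (λ/2)‖x^r − x‖² − ((λ+μ)/2)‖x^{r+1} − x‖² for every x ∈ ℝ^d. -/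

import Mathlib

open Filter Topology

section helpers
variable {E : Type*} [NormedAddCommGroup E] [InnerProductSpace ℝ E]

lemma combo_norm_sq (a b : E) (t : ℝ) :
    ‖t • a + (1 - t) • b‖ ^ 2 = t * ‖a‖ ^ 2 + (1 - t) * ‖b‖ ^ 2 - t * (1 - t) * ‖a - b‖ ^ 2 := by
  rw [norm_add_sq_real, norm_smul, norm_smul, real_inner_smul_left, real_inner_smul_right,
    norm_sub_sq_real]
  simp only [mul_pow, Real.norm_eq_abs, sq_abs]
  ring

lemma min_strong (φ : E → ℝ) (m : ℝ) (x0 : E)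
    (hsc : ∀ (x : E) (t : ℝ), 0 < t → t < 1 →
      φ (t • x + (1 - t) • x0) ≤ t * φ x + (1 - t) * φ x0 - m / 2 * (t * (1 - t)) * ‖x - x0‖ ^ 2)
    (hx0 : ∀ y, φ x0 ≤ φ y) (x : E) :
    φ x0 + m / 2 * ‖x - x0‖ ^ 2 ≤ φ x := by
  have key : ∀ t ∈ Set.Ioo (0:ℝ) 1,
      φ x0 + m / 2 * ((1 - t) * ‖x - x0‖ ^ 2) ≤ φ x := by
    intro t ht
    have h1 := hsc x t ht.1 ht.2
    have h2 := hx0 (t • x + (1 - t) • x0)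
    nlinarith [h1, h2, ht.1]
  have hne : (nhdsWithin (0:ℝ) (Set.Ioo (0:ℝ) 1)).NeBot := by
    rw [← mem_closure_iff_nhdsWithin_neBot, closure_Ioo one_ne_zero.symm]
    exact Set.left_mem_Icc.2 zero_le_one
  have htend : Filter.Tendsto (fun t : ℝ => φ x0 + m / 2 * ((1 - t) * ‖x - x0‖ ^ 2))
      (nhdsWithin (0:ℝ) (Set.Ioo (0:ℝ) 1))
      (𝓝 (φ x0 + m / 2 * ((1 - 0) * ‖x - x0‖ ^ 2))) := by
    apply Filter.Tendsto.mono_left _ nhdsWithin_le_nhds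
    exact Continuous.tendsto (by fun_prop) 0
  have := le_of_tendsto htend (by
    filter_upwards [self_mem_nhdsWithin] with t ht using key t ht)
  simpa using this

lemma cs_bound {n : ℕ} (Δ di : Fin n → E) (lam U : ℝ) (hlam : 0 ≤ lam) (hU : 0 ≤ U)
    (hT : ∑ i, ‖Δ i‖ ^ 2 ≤ lam ^ 2 * U) :
    -(lam / 2) * (U + ∑ i, ‖di i‖ ^ 2) ≤ ∑ i, (inner ℝ (Δ i) (di i) : ℝ) := by
  set S := ∑ i, ‖di i‖ ^ 2 with hS
  set T := ∑ i, ‖Δ i‖ ^ 2 with hTd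
  have hS0 : 0 ≤ S := Finset.sum_nonneg fun i _ => sq_nonneg _
  have h1 : ∀ i : Fin n, -(inner ℝ (Δ i) (di i) : ℝ) ≤ ‖Δ i‖ * ‖di i‖ := by
    intro i
    have := abs_real_inner_le_norm (Δ i) (di i)
    have := (abs_le.1 this).1
    linarith
  have h2 : ∑ i, ‖Δ i‖ * ‖di i‖ ≤ Real.sqrt T * Real.sqrt S :=
    Real.sum_mul_le_sqrt_mul_sqrt _ _ _
  have hs1 : Real.sqrt T ≤ lam * Real.sqrt U := by
    rw [show lam * Real.sqrt U = Real.sqrt (lam ^ 2 * U) by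
      rw [Real.sqrt_mul (sq_nonneg _), Real.sqrt_sq hlam]]
    exact Real.sqrt_le_sqrt hT
  have hs2 : Real.sqrt U * Real.sqrt S ≤ (U + S) / 2 := by
    nlinarith [sq_nonneg (Real.sqrt U - Real.sqrt S), Real.sq_sqrt hU, Real.sq_sqrt hS0]
  have h3 : Real.sqrt T * Real.sqrt S ≤ lam / 2 * (U + S) := by
    calc Real.sqrt T * Real.sqrt S ≤ (lam * Real.sqrt U) * Real.sqrt S :=
          mul_le_mul_of_nonneg_right hs1 (Real.sqrt_nonneg _)
      _ = lam * (Real.sqrt U * Real.sqrt S) := by ring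
      _ ≤ lam * ((U + S) / 2) := mul_le_mul_of_nonneg_left hs2 hlam
      _ = lam / 2 * (U + S) := by ring
  have h4 : -∑ i, (inner ℝ (Δ i) (di i) : ℝ) ≤ ∑ i, ‖Δ i‖ * ‖di i‖ := by
    rw [← Finset.sum_neg_distrib]
    exact Finset.sum_le_sum fun i _ => h1 i
  linarith

variable [CompleteSpace E]

lemma seg_sc (f : E → ℝ) (h0 xr : E) (μ lam : ℝ)
    (hconv : ∀ x y, f y ≥ f x + (inner ℝ (gradient f x) (y - x) : ℝ) + μ / 2 * ‖x - y‖ ^ 2)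
    (a b : E) (t : ℝ) (ht : 0 < t) (ht1 : t < 1) :
    (f (t • a + (1-t) • b) - (inner ℝ (t • a + (1-t) • b) h0 : ℝ)
        + lam/2 * ‖(t • a + (1-t) • b) - xr‖^2)
      ≤ t * (f a - (inner ℝ a h0 : ℝ) + lam/2 * ‖a - xr‖^2)
        + (1-t) * (f b - (inner ℝ b h0 : ℝ) + lam/2 * ‖b - xr‖^2)
        - (μ+lam)/2 * (t*(1-t)) * ‖a - b‖^2 := by
  set z := t • a + (1-t) • b with hz
  have hA := hconv z a
  have hB := hconv z b
  have haz : a - z = (1-t) • (a - b) := by rw [hz]; module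
  have hbz : b - z = (-t) • (a - b) := by rw [hz]; module
  have hiA : (inner ℝ (gradient f z) (a - z) : ℝ) = (1-t) * (inner ℝ (gradient f z) (a-b) : ℝ) := by
    rw [haz, real_inner_smul_right]
  have hiB : (inner ℝ (gradient f z) (b - z) : ℝ) = (-t) * (inner ℝ (gradient f z) (a-b) : ℝ) := by
    rw [hbz, real_inner_smul_right]
  have hnA : ‖z - a‖^2 = (1-t)^2 * ‖a - b‖^2 := by
    have : z - a = (-(1-t)) • (a - b) := by rw [hz]; module
    rw [this, norm_smul]; simp only [mul_pow, Real.norm_eq_abs, sq_abs]; try ring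
  have hnB : ‖z - b‖^2 = t^2 * ‖a - b‖^2 := by
    have : z - b = t • (a - b) := by rw [hz]; module
    rw [this, norm_smul]; simp only [mul_pow, Real.norm_eq_abs, sq_abs]; try ring
  have hlin : (inner ℝ z h0 : ℝ) = t * (inner ℝ a h0 : ℝ) + (1-t) * (inner ℝ b h0 : ℝ) := by
    rw [hz, inner_add_left, real_inner_smul_left, real_inner_smul_left]
  have hquad : ‖z - xr‖^2 = t * ‖a - xr‖^2 + (1-t) * ‖b - xr‖^2 - t*(1-t) * ‖a - b‖^2 := by
    have h1 : z - xr = t • (a - xr) + (1-t) • (b - xr) := by rw [hz]; module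
    have h2 : (a - xr) - (b - xr) = a - b := by abel
    rw [h1, combo_norm_sq, h2]
  rw [hiA, hnA] at hA
  rw [hiB, hnB] at hB
  rw [hlin, hquad]
  nlinarith [hA, hB, ht, ht1]

lemma grad_avg {n : ℕ} (f : Fin n → E → ℝ) (hf : ∀ i, ContDiff ℝ 1 (f i))
    (fbar : E → ℝ) (hfbar : fbar = fun x => (1 / (n : ℝ)) * ∑ i, f i x) (xr : E) :
    gradient fbar xr = (1 / (n : ℝ)) • ∑ i, gradient (f i) xr := by
  have hdi : ∀ i, DifferentiableAt ℝ (f i) xr :=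
    fun i => ((hf i).differentiable one_ne_zero).differentiableAt
  have hsum : DifferentiableAt ℝ (fun x => ∑ i, f i x) xr :=
    DifferentiableAt.fun_sum fun i _ => hdi i
  have h1 : fderiv ℝ fbar xr = (1 / (n : ℝ)) • ∑ i, fderiv ℝ (f i) xr := by
    rw [hfbar, fderiv_const_mul hsum]
    congr 1
    exact fderiv_fun_sum fun i _ => hdi i
  unfold gradient
  rw [h1, map_smul, map_sum]

end helpers

set_option maxHeartbeats 1000000 in
theorem stmt_12 {d n : ℕ} (hn : 0 < n) (f : Fin n → EuclideanSpace ℝ (Fin d) → ℝ)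
    (hf : ∀ i, ContDiff ℝ 1 (f i)) (μ δA lam : ℝ) (hμ : 0 ≤ μ) (hδ : 0 ≤ δA)
    (hlam : δA ≤ lam)
    (hconv : ∀ i, ∀ x y, f i y ≥ f i x + (inner ℝ (gradient (f i) x) (y - x) : ℝ)
        + μ / 2 * ‖x - y‖ ^ 2)
    (fbar : EuclideanSpace ℝ (Fin d) → ℝ)
    (hfbar : fbar = fun x => (1 / (n : ℝ)) * ∑ i, f i x)
    (hAHD : ∀ x y, (1 / (n : ℝ)) * ∑ i,
      ‖(gradient (f i) x - gradient fbar x) - (gradient (f i) y - gradient fbar y)‖ ^ 2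
        ≤ δA ^ 2 * ‖x - y‖ ^ 2)
    (xstar : EuclideanSpace ℝ (Fin d)) (hmin : ∀ y, fbar xstar ≤ fbar y)
    (xr : EuclideanSpace ℝ (Fin d))
    (F : Fin n → EuclideanSpace ℝ (Fin d) → ℝ)
    (hF : ∀ i, F i = fun z => f i z
        - (inner ℝ z (gradient (f i) xr - gradient fbar xr) : ℝ)
        + lam / 2 * ‖z - xr‖ ^ 2)
    (xl : Fin n → EuclideanSpace ℝ (Fin d))
    (hxl : ∀ i, ∀ y, F i (xl i) ≤ F i y)
    (xnext : EuclideanSpace ℝ (Fin d))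
    (hxnext : xnext = (n : ℝ)⁻¹ • ∑ i, xl i) :
    ∀ x, fbar xnext - fbar x
      ≤ lam / 2 * ‖xr - x‖ ^ 2 - (lam + μ) / 2 * ‖xnext - x‖ ^ 2 := by
  intro x
  have hN : (0:ℝ) < (n:ℝ) := by exact_mod_cast hn
  have hNne : (n:ℝ) ≠ 0 := ne_of_gt hN
  have hlam0 : 0 ≤ lam := le_trans hδ hlam
  set h : Fin n → EuclideanSpace ℝ (Fin d) := fun i => gradient (f i) xr - gradient fbar xr
    with hh
  set di : Fin n → EuclideanSpace ℝ (Fin d) := fun i => xl i - xnext with hdi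
  set Δ : Fin n → EuclideanSpace ℝ (Fin d) := fun i =>
    (gradient (f i) xnext - gradient fbar xnext) - h i with hΔ
  -- Σ h i = 0
  have hsumh : ∑ i, h i = 0 := by
    have hg := grad_avg f hf fbar hfbar xr
    simp only [hh, Finset.sum_sub_distrib, Finset.sum_const, Finset.card_univ,
      Fintype.card_fin, hg]
    rw [← Nat.cast_smul_eq_nsmul ℝ, smul_smul, mul_one_div, div_self hNne, one_smul, sub_self]
  -- Σ di i = 0
  have hsumd : ∑ i, di i = 0 := by
    simp only [hdi, Finset.sum_sub_distrib, Finset.sum_const, Finset.card_univ,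
      Fintype.card_fin]
    rw [← Nat.cast_smul_eq_nsmul ℝ, hxnext, smul_smul, mul_inv_cancel₀ hNne, one_smul, sub_self]
  -- sum of f at a point
  have hsumf : ∀ z, ∑ i, f i z = (n:ℝ) * fbar z := by
    intro z
    rw [hfbar]
    field_simp
  -- strong convexity minimum bound
  have hkey : ∀ (i : Fin n) (x' : EuclideanSpace ℝ (Fin d)),
      F i (xl i) + (μ + lam) / 2 * ‖x' - xl i‖ ^ 2 ≤ F i x' := by
    intro i x'
    refine min_strong (F i) (μ + lam) (xl i) ?_ (hxl i) x'
    intro a t ht0 ht1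
    have := seg_sc (f i) (h i) xr μ lam (hconv i) a (xl i) t ht0 ht1
    simpa only [hF i] using this
  -- variance decomposition at x
  have hvar1 : ∑ i, ‖x - xl i‖ ^ 2
      = (n:ℝ) * ‖x - xnext‖ ^ 2 + ∑ i, ‖di i‖ ^ 2 := by
    have e : ∀ i : Fin n, ‖x - xl i‖ ^ 2
        = ‖x - xnext‖ ^ 2 - 2 * (inner ℝ (x - xnext) (di i) : ℝ) + ‖di i‖ ^ 2 := by
      intro i
      rw [show x - xl i = (x - xnext) - di i by simp only [hdi]; abel, norm_sub_sq_real]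
    rw [Finset.sum_congr rfl fun i _ => e i]
    rw [Finset.sum_add_distrib, Finset.sum_sub_distrib, Finset.sum_const, Finset.card_univ,
      Fintype.card_fin, ← Finset.mul_sum, ← inner_sum, hsumd, inner_zero_right,
      nsmul_eq_mul]
    ring
  -- variance decomposition of ‖xl i - xr‖²
  have hvar2 : ∑ i, ‖xl i - xr‖ ^ 2
      = ∑ i, ‖di i‖ ^ 2 + (n:ℝ) * ‖xnext - xr‖ ^ 2 := by
    have e : ∀ i : Fin n, ‖xl i - xr‖ ^ 2
        = ‖di i‖ ^ 2 + 2 * (inner ℝ (di i) (xnext - xr) : ℝ) + ‖xnext - xr‖ ^ 2 := by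
      intro i
      rw [show xl i - xr = di i + (xnext - xr) by simp only [hdi]; abel, norm_add_sq_real]
    rw [Finset.sum_congr rfl fun i _ => e i]
    rw [Finset.sum_add_distrib, Finset.sum_add_distrib, Finset.sum_const, Finset.card_univ,
      Fintype.card_fin, ← Finset.mul_sum, ← sum_inner, hsumd, inner_zero_left,
      nsmul_eq_mul]
    ring
  -- value of Σ F i x
  have hFx : ∑ i, F i x = (n:ℝ) * fbar x + (n:ℝ) * (lam / 2 * ‖x - xr‖ ^ 2) := by
    have e : ∀ i : Fin n, F i x
        = f i x - (inner ℝ x (h i) : ℝ) + lam / 2 * ‖x - xr‖ ^ 2 := by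
      intro i; rw [hF i]
    rw [Finset.sum_congr rfl fun i _ => e i]
    rw [Finset.sum_add_distrib, Finset.sum_sub_distrib, Finset.sum_const, Finset.card_univ,
      Fintype.card_fin, ← inner_sum, hsumh, inner_zero_right, hsumf, nsmul_eq_mul]
    ring
  -- AHD bound on Σ ‖Δ i‖²
  have hW : (0:ℝ) ≤ (n:ℝ) * ‖xnext - xr‖ ^ 2 := by positivity
  have hT : ∑ i, ‖Δ i‖ ^ 2 ≤ lam ^ 2 * ((n:ℝ) * ‖xnext - xr‖ ^ 2) := by
    have h1 := hAHD xnext xr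
    have h2 : ∑ i, ‖Δ i‖ ^ 2 ≤ (n:ℝ) * (δA ^ 2 * ‖xnext - xr‖ ^ 2) := by
      have h5 := mul_le_mul_of_nonneg_left h1 (le_of_lt hN)
      rw [← mul_assoc, mul_one_div, div_self hNne, one_mul] at h5
      simpa only [hΔ, hh] using h5
    have h3 : (0:ℝ) ≤ lam ^ 2 - δA ^ 2 := by nlinarith
    nlinarith [mul_nonneg h3 hW]
  have hCS : -(lam / 2) * ((n:ℝ) * ‖xnext - xr‖ ^ 2 + ∑ i, ‖di i‖ ^ 2)
      ≤ ∑ i, (inner ℝ (Δ i) (di i) : ℝ) :=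
    cs_bound Δ di lam _ hlam0 hW hT
  -- per-client lower bound at the minimizer
  have hper : ∀ i : Fin n,
      f i xnext - (inner ℝ xnext (h i) : ℝ) + (inner ℝ (Δ i) (di i) : ℝ)
        + (inner ℝ (gradient fbar xnext) (di i) : ℝ) + lam / 2 * ‖xl i - xr‖ ^ 2
      ≤ F i (xl i) := by
    intro i
    rw [hF i]
    simp only
    have h1 := hconv i xnext (xl i)
    have h2 : (inner ℝ (xl i) (h i) : ℝ)
        = (inner ℝ xnext (h i) : ℝ) + (inner ℝ (di i) (h i) : ℝ) := by
      rw [hdi]; simp only [inner_sub_left]; ring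
    have h3 : (inner ℝ (Δ i) (di i) : ℝ) = (inner ℝ (gradient (f i) xnext) (di i) : ℝ)
        - (inner ℝ (gradient fbar xnext) (di i) : ℝ) - (inner ℝ (h i) (di i) : ℝ) := by
      have e1 : Δ i = gradient (f i) xnext - gradient fbar xnext - h i := by simp only [hΔ]
      rw [e1, inner_sub_left, inner_sub_left]
    have h3b : (inner ℝ (h i) (di i) : ℝ) = (inner ℝ (di i) (h i) : ℝ) := real_inner_comm _ _
    have h4 : (inner ℝ (gradient (f i) xnext) (xl i - xnext) : ℝ)
        = (inner ℝ (gradient (f i) xnext) (di i) : ℝ) := by rw [hdi]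
    rw [h4] at h1
    have h5 : 0 ≤ μ / 2 * ‖xnext - xl i‖ ^ 2 := by positivity
    linarith [h1, h5, h2, h3, h3b]
  have hFxl : (n:ℝ) * fbar xnext ≤ ∑ i, F i (xl i) := by
    have hsumper := Finset.sum_le_sum fun i (_ : i ∈ Finset.univ) => hper i
    rw [Finset.sum_add_distrib, Finset.sum_add_distrib, Finset.sum_add_distrib,
      Finset.sum_sub_distrib, ← inner_sum, hsumh, inner_zero_right, ← inner_sum, hsumd,
      inner_zero_right, hsumf, ← Finset.mul_sum, hvar2] at hsumper
    linarith [hCS, hsumper]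
  -- combine everything
  have hsum1 : ∑ i, F i (xl i) + (μ + lam) / 2 * ∑ i, ‖x - xl i‖ ^ 2 ≤ ∑ i, F i x := by
    have h6 := Finset.sum_le_sum fun i (_ : i ∈ Finset.univ) => hkey i x
    rw [Finset.sum_add_distrib, ← Finset.mul_sum] at h6
    exact h6
  have hdnn : 0 ≤ ∑ i, ‖di i‖ ^ 2 := Finset.sum_nonneg fun i _ => sq_nonneg _
  have hm : 0 ≤ (μ + lam) / 2 := by positivity
  have hfinal : (n:ℝ) * fbar xnext + (μ + lam) / 2 * ((n:ℝ) * ‖x - xnext‖ ^ 2)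
      ≤ (n:ℝ) * fbar x + (n:ℝ) * (lam / 2 * ‖x - xr‖ ^ 2) := by
    rw [← hFx]
    rw [hvar1] at hsum1
    nlinarith [hFxl, hsum1, hdnn, hm]
  have h6 : (n:ℝ) * (fbar xnext + (μ + lam) / 2 * ‖x - xnext‖ ^ 2)
      ≤ (n:ℝ) * (fbar x + lam / 2 * ‖x - xr‖ ^ 2) := by nlinarith [hfinal]
  have hgoal := le_of_mul_le_mul_left h6 hN
  rw [norm_sub_rev xr x, norm_sub_rev xnext x]
  linarith [hgoal]
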